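/- arXiv:0907.1739 — 2 statements merged into one kernel-verified Lean document; each statement's English description precedes it below -/
import Mathlib

section
/- For all integers n ≥ 1 and 1 ≤ k ≤ n, the recursion F_n^k = Σ_{i=0}^{k} binom(k, i) * F_{n-k+i}^{2i} holds, where binom(k, i) = k!/(i!(k-i)!) is the binomial coefficient. -/
/-- An available signal sequence of length `2n`: a binary sequence (`true` = '1',
`false` = '0') of length `2n` with as many ones as zeros, such that every prefix
contains at least as many ones as zeros. -/
def IsAvail (n : ℕ) (w : List Bool) : Prop :=
  w.length = 2 * n ∧ w.count true = n ∧ w.count false = n ∧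
  ∀ k : ℕ, (w.take k).count false ≤ (w.take k).count true

/-- `S n`: the number of available signal sequences of length `2n`. -/
noncomputable def numAvail (n : ℕ) : ℕ :=
  Nat.card {w : List Bool // IsAvail n w}

/-- `F n k`: the number of available signal sequences of length `2n`
whose first `k` symbols all equal '1'. -/
noncomputable def numAvailF (n k : ℕ) : ℕ :=
  Nat.card {w : List Bool // IsAvail n w ∧ w.take k = List.replicate k true}

namespace AvailAux

/-- Balanced prefix condition. -/
def Bal (w : List Bool) : Prop := ∀ m, ((w.take m).count false) ≤ (w.take m).count true

lemma count_take_append (a t : List Bool) (m : ℕ) (b : Bool) :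
    (((a ++ t).take m).count b) = (a.take m).count b + (t.take (m - a.length)).count b := by
  rw [List.take_append, List.count_append]

lemma bal_append_iff {a : List Bool} (ha : Bal a) (t : List Bool) :
    Bal (a ++ t) ↔
      ∀ m, a.count false + (t.take m).count false ≤ a.count true + (t.take m).count true := by
  constructor
  · intro h m
    have := h (a.length + m)
    rwa [count_take_append, count_take_append, List.take_of_length_le (Nat.le_add_right _ _),
      Nat.add_sub_cancel_left] at this
  · intro h m
    rw [show ((a ++ t).take m) = a.take m ++ t.take (m - a.length) from
      List.take_append .., List.count_append, List.count_append]
    by_cases hm : m ≤ a.length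
    · have : m - a.length = 0 := Nat.sub_eq_zero_of_le hm
      rw [this]
      simpa using ha m
    · rw [List.take_of_length_le (by omega)]
      exact h (m - a.length)

lemma count_add_count (l : List Bool) : l.count true + l.count false = l.length := by
  induction l with
  | nil => rfl
  | cons h t ih => cases h <;> simp [List.count_cons] <;> omega

lemma pres {N M : ℕ} {a b : List Bool} (hbala : Bal a) (hbalb : Bal b)
    (h1 : N + b.count true = M + a.count true)
    (h2 : N + b.count false = M + a.count false)
    (h3 : 2 * N + b.length = 2 * M + a.length)
    {w : List Bool} (hw : IsAvail N w ∧ w.take a.length = a) :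
    IsAvail M (b ++ w.drop a.length) ∧ (b ++ w.drop a.length).take b.length = b := by
  obtain ⟨⟨hlen, hct, hcf, hbal⟩, htake⟩ := hw
  have hw' : w = a ++ w.drop a.length := by
    conv_lhs => rw [← List.take_append_drop a.length w, htake]
  set t := w.drop a.length with ht
  rw [hw'] at hlen hct hcf hbal
  rw [List.length_append] at hlen
  rw [List.count_append] at hct hcf
  have hbal' := (bal_append_iff hbala t).mp hbal
  refine ⟨⟨?_, ?_, ?_, ?_⟩, List.take_left⟩
  · rw [List.length_append]; omega
  · rw [List.count_append]; omega
  · rw [List.count_append]; omega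
  · show Bal (b ++ t)
    rw [bal_append_iff hbalb]
    intro m
    have := hbal' m
    omega

lemma card_prefix_eq {N M : ℕ} {a b : List Bool} (hbala : Bal a) (hbalb : Bal b)
    (h1 : N + b.count true = M + a.count true)
    (h2 : N + b.count false = M + a.count false)
    (h3 : 2 * N + b.length = 2 * M + a.length) :
    Nat.card {w : List Bool // IsAvail N w ∧ w.take a.length = a} =
      Nat.card {u : List Bool // IsAvail M u ∧ u.take b.length = b} := by
  apply Nat.card_congr
  refine ⟨fun w => ⟨b ++ w.1.drop a.length, pres hbala hbalb h1 h2 h3 w.2⟩,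
          fun u => ⟨a ++ u.1.drop b.length, pres hbalb hbala h1.symm h2.symm h3.symm u.2⟩,
          ?_, ?_⟩
  · intro w
    apply Subtype.ext
    simp only
    rw [List.drop_left]
    conv_rhs => rw [← List.take_append_drop a.length w.1, w.2.2]
  · intro u
    apply Subtype.ext
    simp only
    rw [List.drop_left]
    conv_rhs => rw [← List.take_append_drop b.length u.1, u.2.2]

lemma bal_replicate (j : ℕ) : Bal (List.replicate j true) := by
  intro m
  simp [List.take_replicate, List.count_replicate]

lemma count_false_replicate_true (j : ℕ) : (List.replicate j true).count false = 0 := by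
  simp [List.count_replicate]

lemma bal_rep_append (k : ℕ) (x : List Bool) (hx : x.length = k) :
    Bal (List.replicate k true ++ x) := by
  intro m
  rw [count_take_append, count_take_append, List.length_replicate, List.take_replicate,
    count_false_replicate_true, List.count_replicate_self]
  have h1 : (x.take (m - k)).count false ≤ (x.take (m - k)).length := List.count_le_length
  rw [List.length_take, hx] at h1
  omega

lemma finite_avail (n : ℕ) (P : List Bool → Prop) :
    Finite {w : List Bool // IsAvail n w ∧ P w} := by
  have h : {l : List Bool | l.length = 2 * n}.Finite := List.finite_length_eq _ _
  have := h.to_subtype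
  exact Finite.of_injective
    (fun w => (⟨w.1, w.2.1.1⟩ : {l : List Bool | l.length = 2 * n}))
    fun u v huv => by
      apply Subtype.ext
      have := congrArg Subtype.val huv
      simpa using this

lemma count_ofFn_true {k : ℕ} (f : Fin k → Bool) :
    (List.ofFn f).count true = ∑ j, (if f j = true then 1 else 0) := by
  induction k with
  | zero => simp
  | succ k ih =>
    rw [List.ofFn_succ, Fin.sum_univ_succ, List.count_cons, ih]
    cases h0 : f 0
    · simp [h0]
    · simp [h0, Nat.add_comm]

/-- The middle block corresponding to a set of positions of ones. -/
def blk (k : ℕ) (s : Finset (Fin k)) : List Bool := List.ofFn (fun j => decide (j ∈ s))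

lemma blk_length (k : ℕ) (s : Finset (Fin k)) : (blk k s).length = k := List.length_ofFn

lemma blk_count_true (k : ℕ) (s : Finset (Fin k)) : (blk k s).count true = s.card := by
  rw [blk.eq_def, count_ofFn_true]
  simp only [decide_eq_true_eq]
  rw [Finset.sum_ite_mem, Finset.univ_inter]
  exact (Finset.card_eq_sum_ones s).symm

lemma blk_count_false (k : ℕ) (s : Finset (Fin k)) : (blk k s).count false = k - s.card := by
  have h := count_add_count (blk k s)
  rw [blk_count_true, blk_length] at h
  omega

lemma card_le (k : ℕ) (s : Finset (Fin k)) : s.card ≤ k := by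
  simpa using Finset.card_le_card (Finset.subset_univ s)

lemma fiber_card (n k : ℕ) (hkn : k ≤ n) (s : Finset (Fin k)) :
    Nat.card {w : List Bool // IsAvail n w ∧
        w.take (2 * k) = List.replicate k true ++ blk k s}
      = numAvailF (n - k + s.card) (2 * s.card) := by
  set i := s.card with hi
  have hik : i ≤ k := card_le k s
  have key := card_prefix_eq (N := n) (M := n - k + i)
    (a := List.replicate k true ++ blk k s) (b := List.replicate (2 * i) true)
    (bal_rep_append k (blk k s) (blk_length k s)) (bal_replicate _)
    (by simp only [List.count_append, List.count_replicate_self, blk_count_true]; omega)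
    (by simp only [List.count_append, count_false_replicate_true, blk_count_false]; omega)
    (by rw [List.length_append, List.length_replicate, List.length_replicate, blk_length]
        omega)
  rw [List.length_append, List.length_replicate, blk_length, ← two_mul] at key
  rw [List.length_replicate] at key
  exact key

end AvailAux

open AvailAux in
/-- The recursion `F n k = ∑_{i=0}^{k} C(k,i) F_{n-k+i}^{2i}` for `1 ≤ k ≤ n`. -/
theorem numAvailF_recursion (n k : ℕ) (hk : 1 ≤ k) (hkn : k ≤ n) :
    numAvailF n k = ∑ i ∈ Finset.range (k + 1), k.choose i * numAvailF (n - k + i) (2 * i) := by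
  classical
  -- the fibers
  set T : Finset (Fin k) → Type := fun s =>
    {w : List Bool // IsAvail n w ∧ w.take (2 * k) = List.replicate k true ++ blk k s} with hT
  -- Step 1: equivalence with the sigma type
  have E : {w : List Bool // IsAvail n w ∧ w.take k = List.replicate k true} ≃ Σ s, T s := by
    refine ⟨fun w => ⟨Finset.univ.filter (fun j : Fin k => w.1.getD (k + j) false = true),
        ⟨w.1, w.2.1, ?_⟩⟩,
      fun u => ⟨u.2.1, u.2.2.1, ?_⟩, ?_, ?_⟩
    · -- take (2k) condition
      obtain ⟨⟨hlen, -, -, -⟩, htk⟩ := w.2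
      have h2k : 2 * k ≤ 2 * n := by omega
      rw [two_mul, List.take_add, htk]
      congr 1
      apply List.ext_getElem
      · simp [blk, hlen]; omega
      · intro j hj1 hj2
        have hj : j < k := by simp [hlen] at hj1; omega
        have hkj : k + j < w.1.length := by omega
        simp only [List.getElem_take, List.getElem_drop, blk, List.getElem_ofFn,
          Finset.mem_filter, Finset.mem_univ, true_and]
        rw [List.getD_eq_getElem _ _ hkj]
        simp
    · -- take k condition from the fiber condition
      obtain ⟨⟨hlen, -, -, -⟩, htk⟩ := u.2.2
      have : (u.2.1.take (2 * k)).take k = u.2.1.take k := by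
        rw [List.take_take]
        congr 1
        omega
      rw [← this, htk, List.take_append_of_le_length (by simp),
        List.take_of_length_le (by simp)]
    · intro w
      apply Subtype.ext
      rfl
    · rintro ⟨s, w⟩
      have hs : (Finset.univ.filter (fun j : Fin k => w.1.getD (k + ↑j) false = true)) = s := by
        obtain ⟨⟨hlen, -, -, -⟩, htk⟩ := w.2
        ext j
        simp only [Finset.mem_filter, Finset.mem_univ, true_and]
        have hkj : k + ↑j < w.1.length := by have := j.2; omega
        have hkj2 : k + ↑j < (w.1.take (2 * k)).length := by
          rw [List.length_take]; have := j.2; omega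
        have e1 : (w.1.take (2 * k)).getD (k + ↑j) false = w.1.getD (k + ↑j) false := by
          rw [List.getD_eq_getElem _ _ hkj2, List.getD_eq_getElem _ _ hkj]
          exact List.getElem_take ..
        rw [← e1, htk, List.getD_append_right _ _ _ _ (by simp),
          List.length_replicate, Nat.add_sub_cancel_left]
        have hjb : (↑j : ℕ) < (blk k s).length := by rw [blk_length]; exact j.2
        rw [List.getD_eq_getElem _ _ hjb]
        simp only [blk, List.getElem_ofFn]
        simp
      exact Sigma.ext hs ((Subtype.heq_iff_coe_eq (fun l => by simp only [hs])).mpr rfl)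
  -- Step 2: Nat.card computations
  haveI : ∀ s, Finite (T s) := fun s => finite_avail n _
  letI : ∀ s, Fintype (T s) := fun s => Fintype.ofFinite _
  have hcard : numAvailF n k = ∑ s : Finset (Fin k), Nat.card (T s) := by
    show Nat.card {w : List Bool // IsAvail n w ∧ w.take k = List.replicate k true} = _
    rw [Nat.card_congr E, Nat.card_eq_fintype_card, Fintype.card_sigma]
    exact Finset.sum_congr rfl fun s _ => (Nat.card_eq_fintype_card).symm
  rw [hcard]
  -- Step 3: replace fiber cards and regroup by |s|
  have hfib : ∀ s : Finset (Fin k), Nat.card (T s) = numAvailF (n - k + s.card) (2 * s.card) :=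
    fun s => fiber_card n k hkn s
  calc ∑ s : Finset (Fin k), Nat.card (T s)
      = ∑ s : Finset (Fin k), numAvailF (n - k + s.card) (2 * s.card) :=
        Finset.sum_congr rfl fun s _ => hfib s
    _ = ∑ i ∈ Finset.range (k + 1), ∑ s ∈ Finset.univ.filter (fun s : Finset (Fin k) => s.card = i),
          numAvailF (n - k + s.card) (2 * s.card) := by
        rw [Finset.sum_fiberwise_of_maps_to]
        intro s _
        rw [Finset.mem_range]
        have := card_le k s
        omega
    _ = ∑ i ∈ Finset.range (k + 1), k.choose i * numAvailF (n - k + i) (2 * i) := by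
        refine Finset.sum_congr rfl fun i _ => ?_
        have h1 : ∀ s ∈ Finset.univ.filter (fun s : Finset (Fin k) => s.card = i),
            numAvailF (n - k + s.card) (2 * s.card) = numAvailF (n - k + i) (2 * i) := by
          intro s hs
          rw [Finset.mem_filter] at hs
          rw [hs.2]
        rw [Finset.sum_congr rfl h1, Finset.sum_const, smul_eq_mul]
        congr 1
        rw [← Fintype.card_subtype, Fintype.card_finset_len, Fintype.card_fin]
end

section
/- Let n ≥ 1 and 0 ≤ i ≤ k ≤ n be integers. The number of available signal sequences of length 2n whose first 2k symbols consist of (k+i) ones followed by (k-i) zeros equals F_{n-k+i}^{2i}, i.e., it equals the number of available signal sequences of length 2(n-k+i) whose first 2i symbols are all 1. -/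
lemma count_take_append (j : ℕ) (A r : List Bool) (b : Bool) :
    ((A ++ r).take j).count b = (A.take j).count b + (r.take (j - A.length)).count b := by
  rw [List.take_append, List.count_append]

lemma fwd (n k i : ℕ) (hik : i ≤ k) (hkn : k ≤ n) (w : List Bool)
    (hw : IsAvail n w)
    (hp : w.take (2 * k) = List.replicate (k + i) true ++ List.replicate (k - i) false) :
    IsAvail (n - k + i) (List.replicate (2 * i) true ++ w.drop (2 * k)) := by
  obtain ⟨hlen, hct, hcf, hpre⟩ := hw
  set r := w.drop (2 * k) with hr
  have hwsplit : w = (List.replicate (k + i) true ++ List.replicate (k - i) false) ++ r := by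
    rw [← hp, hr, List.take_append_drop]
  have hrlen : r.length = 2 * n - 2 * k := by
    rw [hr, List.length_drop, hlen]
  have hrt : (k + i) + r.count true = n := by
    have := hct
    rw [hwsplit] at this
    simpa [List.count_replicate] using this
  have hrf : (k - i) + r.count false = n := by
    have := hcf
    rw [hwsplit] at this
    simpa [List.count_replicate] using this
  refine ⟨?_, ?_, ?_, ?_⟩
  · simp [hrlen]; omega
  · simp [List.count_replicate]; omega
  · simp [List.count_replicate]; omega
  · intro j
    simp only [count_take_append]
    simp only [List.length_replicate, List.take_replicate, List.count_replicate]
    simp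
    rcases le_or_gt j (2 * i) with hj | hj
    · have : j - 2 * i = 0 := by omega
      simp [this]
    · have h := hpre (2 * k + (j - 2 * i))
      rw [hwsplit] at h
      simp only [count_take_append] at h
      simp only [List.length_append, List.length_replicate, List.take_replicate,
        List.count_replicate] at h
      simp at h
      have he2 : 2 * k + (j - 2 * i) - (k + i + (k - i)) = j - 2 * i := by omega
      rw [he2] at h
      omega

lemma bwd (n k i : ℕ) (hik : i ≤ k) (hkn : k ≤ n) (v : List Bool)
    (hv : IsAvail (n - k + i) v)
    (hp : v.take (2 * i) = List.replicate (2 * i) true) :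
    IsAvail n ((List.replicate (k + i) true ++ List.replicate (k - i) false) ++ v.drop (2 * i)) := by
  obtain ⟨hlen, hct, hcf, hpre⟩ := hv
  set r := v.drop (2 * i) with hr
  have hvsplit : v = List.replicate (2 * i) true ++ r := by
    rw [← hp, hr, List.take_append_drop]
  have hrlen : r.length = 2 * (n - k + i) - 2 * i := by
    rw [hr, List.length_drop, hlen]
  have hrt : 2 * i + r.count true = n - k + i := by
    have := hct
    rw [hvsplit] at this
    simpa [List.count_replicate] using this
  have hrf : r.count false = n - k + i := by
    have := hcf
    rw [hvsplit] at this
    simpa [List.count_replicate] using this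
  refine ⟨?_, ?_, ?_, ?_⟩
  · simp [hrlen]; omega
  · simp [List.count_replicate]; omega
  · simp [List.count_replicate]; omega
  · intro j
    simp only [count_take_append]
    simp only [List.length_append, List.length_replicate, List.take_replicate,
      List.count_replicate]
    simp
    rcases le_or_gt j (2 * k) with hj | hj
    · have h1 : j - (k + i) - (k - i) = 0 := by omega
      have h2 : j - (k + i + (k - i)) = 0 := by omega
      simp [h1, h2]; omega
    · have h := hpre (2 * i + (j - 2 * k))
      rw [hvsplit] at h
      simp only [count_take_append] at h
      simp only [List.length_replicate, List.take_replicate, List.count_replicate] at h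
      simp at h
      have he3 : j - (k + i + (k - i)) = j - 2 * k := by omega
      rw [he3]
      omega

/-- Removing leading matched 0-1 pairs: the number of available signal sequences of
length `2n` whose first `2k` symbols are `k+i` ones followed by `k-i` zeros equals
`F (n-k+i) (2i)`. -/
theorem avail_prefix_reduction (n k i : ℕ) (hn : 1 ≤ n) (hik : i ≤ k) (hkn : k ≤ n) :
    Nat.card {w : List Bool // IsAvail n w ∧
        w.take (2 * k) = List.replicate (k + i) true ++ List.replicate (k - i) false} =
      numAvailF (n - k + i) (2 * i) := by
  have hPlen : (List.replicate (k + i) true ++ List.replicate (k - i) false).length = 2 * k := by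
    simp; omega
  have hRlen : (List.replicate (2 * i) true : List Bool).length = 2 * i := by simp
  apply Nat.card_congr
  refine ⟨fun w => ⟨List.replicate (2 * i) true ++ w.1.drop (2 * k), ?_, ?_⟩,
    fun v => ⟨(List.replicate (k + i) true ++ List.replicate (k - i) false) ++ v.1.drop (2 * i),
      ?_, ?_⟩, ?_, ?_⟩
  · exact fwd n k i hik hkn w.1 w.2.1 w.2.2
  · exact List.take_left' hRlen
  · exact bwd n k i hik hkn v.1 v.2.1 v.2.2
  · exact List.take_left' hPlen
  · rintro ⟨w, hw, hp⟩
    apply Subtype.ext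
    show (List.replicate (k + i) true ++ List.replicate (k - i) false) ++
      (List.replicate (2 * i) true ++ w.drop (2 * k)).drop (2 * i) = w
    rw [List.drop_left' hRlen, ← hp, List.take_append_drop]
  · rintro ⟨v, hv, hp⟩
    apply Subtype.ext
    show List.replicate (2 * i) true ++
      ((List.replicate (k + i) true ++ List.replicate (k - i) false) ++ v.drop (2 * i)).drop (2 * k) = v
    rw [List.drop_left' hPlen, ← hp, List.take_append_drop]
end
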